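/- Let P ∈ ℝ^{n×n} be doubly stochastic (P𝟏 = 𝟏 and 𝟏ᵀP = 𝟏ᵀ, entries in [0,1]) with strictly positive diagonal entries, and suppose the associated graph (with edges where p_ij > 0) is connected. Then the second largest singular value of P satisfies σ₂(P) < 1. -/

import Mathlib

open Finset Matrix

lemma quad_ident {n : ℕ} (a v : Fin n → ℝ) (ha : ∑ j, a j = 1) :
    ∑ j, ∑ k, a j * a k * (v j - v k) ^ 2
      = 2 * (∑ j, a j * v j ^ 2) - 2 * (∑ j, a j * v j) ^ 2 := by
  have e1 : ∀ j, ∑ k, a j * a k * (v j - v k) ^ 2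
      = a j * v j ^ 2 * (∑ k, a k) - (2 * (a j * v j)) * (∑ k, a k * v k)
        + a j * (∑ k, a k * v k ^ 2) := by
    intro j
    rw [Finset.mul_sum, Finset.mul_sum, Finset.mul_sum, ← Finset.sum_sub_distrib,
      ← Finset.sum_add_distrib]
    exact Finset.sum_congr rfl fun k _ => by ring
  rw [Finset.sum_congr rfl fun j _ => e1 j, ha]
  rw [Finset.sum_add_distrib, Finset.sum_sub_distrib, ← Finset.sum_mul, ← Finset.sum_mul,
    ← Finset.sum_mul, ha, ← Finset.mul_sum]
  ring

lemma key_lemma {n : ℕ} (P : Matrix (Fin n) (Fin n) ℝ)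
    (hnonneg : ∀ i j, 0 ≤ P i j)
    (hrow : ∀ i, ∑ j, P i j = 1) (hcol : ∀ j, ∑ i, P i j = 1)
    (hdiag : ∀ i, 0 < P i i) (v : Fin n → ℝ)
    (hv : ∑ j, v j ^ 2 ≤ ∑ i, (∑ j, P i j * v j) ^ 2) :
    ∀ i j, 0 < P i j → v j = v i := by
  have tnn : ∀ i j k : Fin n, 0 ≤ P i j * P i k * (v j - v k) ^ 2 := fun i j k =>
    mul_nonneg (mul_nonneg (hnonneg _ _) (hnonneg _ _)) (sq_nonneg _)
  set S : ℝ := ∑ i, ∑ j, ∑ k, P i j * P i k * (v j - v k) ^ 2 with hS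
  have hSval : S = 2 * (∑ j, v j ^ 2) - 2 * ∑ i, (∑ j, P i j * v j) ^ 2 := by
    rw [hS, Finset.sum_congr rfl fun i _ => quad_ident (fun j => P i j) v (hrow i),
      Finset.sum_sub_distrib, ← Finset.mul_sum, ← Finset.mul_sum]
    congr 2
    rw [Finset.sum_comm]
    refine Finset.sum_congr rfl fun j _ => ?_
    rw [← Finset.sum_mul, hcol j, one_mul]
  have hSle : S ≤ 0 := by rw [hSval]; linarith
  intro i j hPij
  have t1 : P i j * P i i * (v j - v i) ^ 2
      ≤ ∑ k, P i j * P i k * (v j - v k) ^ 2 :=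
    Finset.single_le_sum (f := fun k => P i j * P i k * (v j - v k) ^ 2)
      (fun k _ => tnn i j k) (Finset.mem_univ i)
  have t2 : ∑ k, P i j * P i k * (v j - v k) ^ 2
      ≤ ∑ j', ∑ k, P i j' * P i k * (v j' - v k) ^ 2 :=
    Finset.single_le_sum (f := fun j' => ∑ k, P i j' * P i k * (v j' - v k) ^ 2)
      (fun j' _ => Finset.sum_nonneg fun k _ => tnn i j' k) (Finset.mem_univ j)
  have t3 : ∑ j', ∑ k, P i j' * P i k * (v j' - v k) ^ 2 ≤ S :=
    Finset.single_le_sum (f := fun i' => ∑ j', ∑ k, P i' j' * P i' k * (v j' - v k) ^ 2)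
      (fun i' _ => Finset.sum_nonneg fun j' _ => Finset.sum_nonneg fun k _ => tnn i' j' k)
      (Finset.mem_univ i)
  have h0 : P i j * P i i * (v j - v i) ^ 2 = 0 :=
    le_antisymm (by linarith) (tnn i j i)
  have hd := hdiag i
  have hsq : (v j - v i) ^ 2 = 0 := by
    rcases mul_eq_zero.1 h0 with h | h
    · rcases mul_eq_zero.1 h with h | h <;> nlinarith
    · exact h
  have := pow_eq_zero_iff (n := 2) (by norm_num) |>.1 hsq
  linarith [sub_eq_zero.1 this]

lemma const_of_adj {n : ℕ} {G : SimpleGraph (Fin n)} {v : Fin n → ℝ}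
    (h : ∀ i j, G.Adj i j → v i = v j) {i j : Fin n} (hr : G.Reachable i j) :
    v i = v j := by
  obtain ⟨w⟩ := hr
  induction w with
  | nil => rfl
  | cons hadj _ ih => exact (h _ _ hadj).trans ih

/-- Second largest singular value of a doubly stochastic matrix with positive diagonal
and connected associated graph is `< 1`.  The singular values of `P` are the square roots
of the eigenvalues of `Pᵀ * P`; the claim `σ₂(P) < 1` is expressed equivalently as:
at most one eigenvalue of `Pᵀ * P` is `≥ 1`. -/
theorem stmt_3 {n : ℕ} (hn : 0 < n) (P : Matrix (Fin n) (Fin n) ℝ)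
    (hnonneg : ∀ i j, 0 ≤ P i j) (hle : ∀ i j, P i j ≤ 1)
    (hrow : ∀ i, ∑ j, P i j = 1) (hcol : ∀ j, ∑ i, P i j = 1)
    (hdiag : ∀ i, 0 < P i i)
    (G : SimpleGraph (Fin n))
    (hG : ∀ i j, G.Adj i j ↔ i ≠ j ∧ 0 < P i j)
    (hconn : G.Connected)
    (hH : (Pᵀ * P).IsHermitian) :
    {i | 1 ≤ hH.eigenvalues i}.ncard ≤ 1 := by
  rw [Set.ncard_le_one (Set.toFinite _)]
  intro a ha b hb
  by_contra hab
  -- each eigenvector with eigenvalue ≥ 1 is constant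
  have key : ∀ c : Fin n, 1 ≤ hH.eigenvalues c →
      ∀ i j : Fin n, (hH.eigenvectorBasis c) i = (hH.eigenvectorBasis c) j := by
    intro c hc
    set v : Fin n → ℝ := ⇑(hH.eigenvectorBasis c) with hv
    have heig : (Pᵀ * P) *ᵥ v = hH.eigenvalues c • v := hH.mulVec_eigenvectorBasis c
    have hquad : ∑ i, (∑ j, P i j * v j) ^ 2 = hH.eigenvalues c * ∑ i, v i ^ 2 := by
      have e1 : ∑ i, (∑ j, P i j * v j) ^ 2 = (P *ᵥ v) ⬝ᵥ (P *ᵥ v) := by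
        simp [dotProduct, Matrix.mulVec, sq]
      have e2 : v ⬝ᵥ ((Pᵀ * P) *ᵥ v) = (P *ᵥ v) ⬝ᵥ (P *ᵥ v) := by
        rw [← Matrix.mulVec_mulVec, Matrix.dotProduct_mulVec, Matrix.vecMul_transpose]
      have e3 : v ⬝ᵥ ((Pᵀ * P) *ᵥ v) = hH.eigenvalues c * ∑ i, v i ^ 2 := by
        rw [heig, dotProduct_smul]
        simp [dotProduct, sq, smul_eq_mul, Finset.mul_sum]
      rw [e1, ← e2, e3]
    have hsum_nonneg : 0 ≤ ∑ i, v i ^ 2 := Finset.sum_nonneg fun i _ => sq_nonneg _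
    have hge : ∑ j, v j ^ 2 ≤ ∑ i, (∑ j, P i j * v j) ^ 2 := by
      rw [hquad]; nlinarith
    have hkey := key_lemma P hnonneg hrow hcol hdiag v hge
    have hadj : ∀ i j, G.Adj i j → v i = v j := fun i j h =>
      (hkey i j ((hG i j).1 h).2).symm
    intro i j
    exact const_of_adj hadj (hconn.preconnected i j)
  -- orthogonality contradiction
  have horth := hH.eigenvectorBasis.orthonormal.2 hab
  have hnorm1 : ‖hH.eigenvectorBasis a‖ = 1 := hH.eigenvectorBasis.orthonormal.1 a
  have hnorm2 : ‖hH.eigenvectorBasis b‖ = 1 := hH.eigenvectorBasis.orthonormal.1 b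
  set i0 : Fin n := ⟨0, hn⟩
  set cA : ℝ := (hH.eigenvectorBasis a) i0 with hcA
  set cB : ℝ := (hH.eigenvectorBasis b) i0 with hcB
  have hconstA := key a ha
  have hconstB := key b hb
  have hinner : (0 : ℝ) = ∑ i, (hH.eigenvectorBasis a) i * (hH.eigenvectorBasis b) i := by
    rw [← horth]
    simp [PiLp.inner_apply, RCLike.inner_apply]
    exact Finset.sum_congr rfl fun i _ => mul_comm _ _
  have hsum : ∑ i : Fin n, (hH.eigenvectorBasis a) i * (hH.eigenvectorBasis b) i
      = n * (cA * cB) := by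
    rw [Finset.sum_congr rfl fun i _ => by rw [hconstA i i0, hconstB i i0]]
    simp [Finset.sum_const, nsmul_eq_mul]
    exact Or.inl rfl
  have hcAne : cA ≠ 0 := by
    intro h
    have : hH.eigenvectorBasis a = 0 := by
      ext i; rw [hconstA i i0]; simpa using h
    rw [this] at hnorm1; simp at hnorm1
  have hcBne : cB ≠ 0 := by
    intro h
    have : hH.eigenvectorBasis b = 0 := by
      ext i; rw [hconstB i i0]; simpa using h
    rw [this] at hnorm2; simp at hnorm2
  have : (n : ℝ) ≠ 0 := Nat.cast_ne_zero.2 hn.ne'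
  rw [hsum] at hinner
  exact (mul_ne_zero this (mul_ne_zero hcAne hcBne)) hinner.symm
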